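/- Let N, n_x, n_u be natural numbers. For each stage j < N let A_j ∈ ℝ^{n_x×n_x}, B_j ∈ ℝ^{n_x×n_u}, and let H_j ∈ ℝ^{(n_x+n_u)×(n_x+n_u)} for j < N and H_N ∈ ℝ^{n_x×n_x} be invertible matrices. Let M be the block lower bidiagonal matrix whose 0-th block row is (E_0, 0, …, 0) and whose (j+1)-th block row has (−A_j −B_j) in the stage-j columns and E_{j+1} in the stage-(j+1) columns, where E_j = (I_{n_x} 0_{n_x×n_u}) for j < N and E_N = I_{n_x}; let H be the block-diagonal matrix with blocks H_j. Then the blocks of Ψ = M H⁻¹ Mᵀ satisfy: Ψ_{0,0} = E_0 H_0⁻¹ E_0ᵀ; Ψ_{j+1,j+1} = (A_j B_j) H_j⁻¹ (A_j B_j)ᵀ + E_{j+1} H_{j+1}⁻¹ E_{j+1}ᵀ for j < N; Ψ_{j+1,j} = −(A_j B_j) H_j⁻¹ E_jᵀ for j < N; and Ψ_{i,j} = 0 whenever |i − j| ≥ 2. -/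

import Mathlib

open Matrix

lemma conj_blockDiagonal' {κ n ι : Type*} [Fintype n] [Fintype ι] [DecidableEq ι]
    (P Q : Matrix κ (n × ι) ℝ) (D : ι → Matrix n n ℝ) (p q : κ) :
    (P * Matrix.blockDiagonal D * Qᵀ) p q
      = ∑ k : ι, ∑ s' : n, (∑ s : n, P p (s, k) * D k s s') * Q q (s', k) := by
  simp only [Matrix.mul_apply, Matrix.transpose_apply, Matrix.blockDiagonal_apply,
    Fintype.sum_prod_type]
  rw [Finset.sum_comm]
  refine Finset.sum_congr rfl fun k _ => Finset.sum_congr rfl fun s' _ => ?_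
  congr 1
  rw [Finset.sum_comm]
  simp [Finset.mul_sum, mul_ite, ite_mul]

noncomputable def Dmat {N nx nu : ℕ} (A : Fin N → Matrix (Fin nx) (Fin nx) ℝ)
    (B : Fin N → Matrix (Fin nx) (Fin nu) ℝ) (E : Matrix (Fin nx) (Fin nx ⊕ Fin nu) ℝ)
    (i : Fin (N + 1)) (k : Fin N) : Matrix (Fin nx) (Fin nx ⊕ Fin nu) ℝ :=
  (if i = k.castSucc then E else 0)
    + (if i = k.succ then -(Matrix.fromCols (A k) (B k)) else 0)

noncomputable def Fmat (N nx : ℕ) (i : Fin (N + 1)) : Matrix (Fin nx) (Fin nx) ℝ :=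
  if i = Fin.last N then 1 else 0

/-- Explicit blocks of the Schur complement `Ψ = M H⁻¹ Mᵀ` for the OCP constraint
matrix `M` (block row 0 is `(E₀, 0, …, 0)`; block row `j+1` has `(−A_j −B_j)` in the
stage-`j` columns and `E_{j+1}` in the stage-`(j+1)` columns, where `E_j = (I 0)` for
`j < N` and `E_N = I`) and the block-diagonal generalized Hessian `H` with invertible
blocks `H_j` (`j < N`) and `H_N`:
`Ψ₀₀ = E₀ H₀⁻¹ E₀ᵀ`, `Ψ_{j+1,j+1} = (A_j B_j) H_j⁻¹ (A_j B_j)ᵀ + E_{j+1} H_{j+1}⁻¹ E_{j+1}ᵀ`,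
`Ψ_{j+1,j} = −(A_j B_j) H_j⁻¹ E_jᵀ`, and `Ψ_{i,j} = 0` for `|i − j| ≥ 2`. -/
theorem stmt_11 (N nx nu : ℕ)
    (A : Fin N → Matrix (Fin nx) (Fin nx) ℝ)
    (B : Fin N → Matrix (Fin nx) (Fin nu) ℝ)
    (Hj : Fin N → Matrix (Fin nx ⊕ Fin nu) (Fin nx ⊕ Fin nu) ℝ)
    (HN : Matrix (Fin nx) (Fin nx) ℝ)
    (hHj : ∀ j, IsUnit (Hj j)) (hHN : IsUnit HN)
    -- the stage blocks E_j = (I 0) for j < N (as a matrix) …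
    (E : Matrix (Fin nx) (Fin nx ⊕ Fin nu) ℝ)
    (hE : E = Matrix.fromCols 1 0)
    -- the constraint matrix M: the x^j column block carries E at block row j and
    -- −A_j at block row j+1; the u^j column block carries −B_j at block row j+1;
    -- the terminal x^N column block carries E_N = I at block row N.
    (M : Matrix (Fin (N + 1) × Fin nx) (((Fin nx ⊕ Fin nu) × Fin N) ⊕ Fin nx) ℝ)
    (hM : M = Matrix.of fun p c =>
      match c with
      | Sum.inl (Sum.inl s, j) =>
          (if p.1 = j.castSucc ∧ p.2 = s then (1 : ℝ) else 0)
            + (if p.1 = j.succ then -(A j p.2 s) else 0)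
      | Sum.inl (Sum.inr s, j) => if p.1 = j.succ then -(B j p.2 s) else 0
      | Sum.inr s => if p.1 = Fin.last N ∧ p.2 = s then (1 : ℝ) else 0)
    -- the block-diagonal generalized Hessian
    (H : Matrix (((Fin nx ⊕ Fin nu) × Fin N) ⊕ Fin nx)
      (((Fin nx ⊕ Fin nu) × Fin N) ⊕ Fin nx) ℝ)
    (hH : H = Matrix.fromBlocks (Matrix.blockDiagonal Hj) 0 0 HN)
    -- the Schur complement
    (Ψ : Matrix (Fin (N + 1) × Fin nx) (Fin (N + 1) × Fin nx) ℝ)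
    (hΨ : Ψ = M * H⁻¹ * Mᵀ)
    -- K i = E_i H_i⁻¹ E_iᵀ, with E_i = (I 0) for i < N and E_N = I
    (K : Fin (N + 1) → Matrix (Fin nx) (Fin nx) ℝ)
    (hK : ∀ i : Fin (N + 1),
      K i = if h : (i : ℕ) < N then E * (Hj ⟨i, h⟩)⁻¹ * Eᵀ else HN⁻¹) :
    (∀ r c, Ψ (0, r) (0, c) = K 0 r c) ∧
    (∀ (j : Fin N) (r c : Fin nx),
      Ψ (j.succ, r) (j.succ, c)
        = (Matrix.fromCols (A j) (B j) * (Hj j)⁻¹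
            * (Matrix.fromCols (A j) (B j))ᵀ + K j.succ) r c) ∧
    (∀ (j : Fin N) (r c : Fin nx),
      Ψ (j.succ, r) (j.castSucc, c)
        = (-(Matrix.fromCols (A j) (B j) * (Hj j)⁻¹ * Eᵀ)) r c) ∧
    (∀ i j : Fin (N + 1), 2 ≤ |(i : ℤ) - (j : ℤ)| →
      ∀ r c, Ψ (i, r) (j, c) = 0) := by
  -- the inverse of H
  have hGinv : H⁻¹ = Matrix.fromBlocks
      (Matrix.blockDiagonal fun k => (Hj k)⁻¹) 0 0 HN⁻¹ := by
    apply Matrix.inv_eq_right_inv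
    rw [hH, Matrix.fromBlocks_multiply]
    have h1 : Matrix.blockDiagonal Hj * Matrix.blockDiagonal (fun k => (Hj k)⁻¹) = 1 := by
      rw [← Matrix.blockDiagonal_mul]
      have : (fun k => Hj k * (Hj k)⁻¹) = fun _ => 1 := by
        funext k
        exact Matrix.mul_nonsing_inv _ ((Matrix.isUnit_iff_isUnit_det _).mp (hHj k))
      rw [this]
      exact Matrix.blockDiagonal_one
    have h2 : HN * HN⁻¹ = 1 :=
      Matrix.mul_nonsing_inv _ ((Matrix.isUnit_iff_isUnit_det _).mp hHN)
    simp [h1, h2, Matrix.fromBlocks_one]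
  -- M in block form
  have hMeq : M = Matrix.fromCols
      (Matrix.of fun p (sk : (Fin nx ⊕ Fin nu) × Fin N) => Dmat A B E p.1 sk.2 p.2 sk.1)
      (Matrix.of fun p s => Fmat N nx p.1 p.2 s) := by
    rw [hM, hE]
    ext p c
    rcases c with ⟨s, k⟩ | s
    · rcases s with x | u
      · simp only [Matrix.fromCols, Dmat, Matrix.of_apply, Matrix.add_apply]
        by_cases h1 : p.1 = k.castSucc <;> by_cases h2 : p.1 = k.succ <;>
          simp_all [Matrix.fromCols, Matrix.one_apply, Fmat, ite_and]
      · simp only [Matrix.fromCols, Dmat, Matrix.of_apply, Matrix.add_apply]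
        by_cases h1 : p.1 = k.castSucc <;> by_cases h2 : p.1 = k.succ <;>
          simp_all [Matrix.fromCols, Fmat]
    · simp [Matrix.fromCols, Fmat, Matrix.one_apply, ite_and]
      by_cases h1 : p.1 = Fin.last N <;> simp [h1, Matrix.one_apply]
  -- master formula for entries of Ψ
  have master : ∀ (i j : Fin (N + 1)) (r c : Fin nx),
      Ψ (i, r) (j, c)
        = (∑ k : Fin N, (Dmat A B E i k * (Hj k)⁻¹ * (Dmat A B E j k)ᵀ)) r c
          + (Fmat N nx i * HN⁻¹ * (Fmat N nx j)ᵀ) r c := by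
    intro i j r c
    rw [hΨ, hGinv, hMeq, Matrix.transpose_fromCols, Matrix.fromCols_mul_fromBlocks,
      Matrix.fromCols_mul_fromRows]
    simp only [Matrix.mul_zero, Matrix.zero_mul, add_zero, zero_add, Matrix.add_apply]
    congr 1
    rw [conj_blockDiagonal']
    rw [Matrix.sum_apply]
    refine Finset.sum_congr rfl fun k _ => ?_
    simp [Matrix.mul_apply]
  -- evaluating the pieces
  have hDeval : ∀ (i : Fin (N + 1)) (k : Fin N),
      Dmat A B E i k = if (i : ℕ) = (k : ℕ) then E
        else if (i : ℕ) = (k : ℕ) + 1 then -(Matrix.fromCols (A k) (B k)) else 0 := by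
    intro i k
    have h1 : (i = k.castSucc) ↔ ((i : ℕ) = (k : ℕ)) := by simp [Fin.ext_iff]
    have h2 : (i = k.succ) ↔ ((i : ℕ) = (k : ℕ) + 1) := by simp [Fin.ext_iff]
    unfold Dmat
    rw [if_congr h1 rfl rfl, if_congr h2 rfl rfl]
    split_ifs with a b b <;> first | omega | simp
  have hFeval : ∀ i : Fin (N + 1),
      Fmat N nx i = if (i : ℕ) = N then 1 else 0 := by
    intro i
    unfold Fmat
    congr 1
    simp [Fin.ext_iff]
  refine ⟨?_, ?_, ?_, ?_⟩
  · -- block (0,0)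
    intro r c
    rw [master]
    by_cases hN : 0 < N
    · have hsum : (∑ k : Fin N, (Dmat A B E 0 k * (Hj k)⁻¹ * (Dmat A B E 0 k)ᵀ))
          = E * (Hj ⟨0, hN⟩)⁻¹ * Eᵀ := by
        rw [Finset.sum_eq_single ⟨0, hN⟩]
        · rw [hDeval]; simp
        · intro k _ hk
          have hk0 : (k : ℕ) ≠ 0 := fun h => hk (Fin.ext h)
          rw [hDeval, if_neg (by simp only [Fin.val_zero]; omega),
            if_neg (by simp only [Fin.val_zero]; omega)]
          simp
        · simp
      have hKval : K 0 = E * (Hj ⟨0, hN⟩)⁻¹ * Eᵀ := by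
        rw [hK, dif_pos (show ((0 : Fin (N + 1)) : ℕ) < N by simpa using hN)]
        congr 2 <;> simp [Fin.ext_iff]
      rw [hsum, hKval, hFeval, if_neg (by simp only [Fin.val_zero]; omega)]
      simp
    · have hN0 : N = 0 := by omega
      subst hN0
      simp only [Finset.univ_eq_empty, Finset.sum_empty, Matrix.zero_apply, zero_add]
      rw [hK, dif_neg (by omega), hFeval, if_pos (by simp)]
      simp
  · -- diagonal blocks (j+1, j+1)
    intro j r c
    rw [master]
    have hjN : (j : ℕ) < N := j.isLt
    have hDj : Dmat A B E j.succ j = -(Matrix.fromCols (A j) (B j)) := by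
      rw [hDeval, if_neg (by simp), if_pos (by simp)]
    by_cases hlt : (j : ℕ) + 1 < N
    · set k' : Fin N := ⟨(j : ℕ) + 1, hlt⟩ with hk'
      have hjk : j ≠ k' := by simp [hk', Fin.ext_iff]
      have hsum : (∑ k : Fin N, (Dmat A B E j.succ k * (Hj k)⁻¹ * (Dmat A B E j.succ k)ᵀ))
          = Matrix.fromCols (A j) (B j) * (Hj j)⁻¹ * (Matrix.fromCols (A j) (B j))ᵀ
            + E * (Hj k')⁻¹ * Eᵀ := by
        rw [← Finset.sum_subset (Finset.subset_univ {j, k'})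
          (by
            intro k _ hk
            simp only [Finset.mem_insert, Finset.mem_singleton, not_or] at hk
            have h1 : ¬((j.succ : Fin (N+1)) : ℕ) = (k : ℕ) := by
              intro h
              apply hk.2
              apply Fin.ext
              simp only [Fin.val_succ] at h
              simp only [hk']
              omega
            have h2 : ¬((j.succ : Fin (N+1)) : ℕ) = (k : ℕ) + 1 := by
              intro h
              apply hk.1
              apply Fin.ext
              simp only [Fin.val_succ] at h
              omega
            rw [hDeval, if_neg h1, if_neg h2]
            simp)]
        have hDk' : Dmat A B E j.succ k' = E := by
          rw [hDeval, if_pos (by simp [hk'])]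
        rw [Finset.sum_pair hjk, hDj, hDk', Matrix.transpose_neg, Matrix.neg_mul,
          Matrix.mul_neg, Matrix.neg_mul, neg_neg]
      have hKval : K j.succ = E * (Hj k')⁻¹ * Eᵀ := by
        rw [hK, dif_pos (show ((j.succ : Fin (N+1)) : ℕ) < N by simpa using hlt)]
        congr 2 <;> simp [hk', Fin.ext_iff]
      rw [hsum, hKval, hFeval, if_neg (by simp only [Fin.val_succ]; omega)]
      simp
    · have hsum : (∑ k : Fin N, (Dmat A B E j.succ k * (Hj k)⁻¹ * (Dmat A B E j.succ k)ᵀ))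
          = Matrix.fromCols (A j) (B j) * (Hj j)⁻¹ * (Matrix.fromCols (A j) (B j))ᵀ := by
        rw [Finset.sum_eq_single j]
        · rw [hDj, Matrix.transpose_neg, Matrix.neg_mul, Matrix.mul_neg, Matrix.neg_mul, neg_neg]
        · intro k _ hk
          have hkN : (k : ℕ) < N := k.isLt
          have hne' : (j : ℕ) ≠ (k : ℕ) := fun h => hk (Fin.ext h.symm)
          rw [hDeval, if_neg (by simp only [Fin.val_succ]; omega),
            if_neg (by simp only [Fin.val_succ]; omega)]
          simp
        · simp
      have hKval : K j.succ = HN⁻¹ := by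
        rw [hK, dif_neg (by simp only [Fin.val_succ]; omega)]
      rw [hsum, hKval, hFeval, if_pos (by simp only [Fin.val_succ]; omega)]
      simp
  · -- subdiagonal blocks (j+1, j)
    intro j r c
    rw [master]
    have hjN : (j : ℕ) < N := j.isLt
    have hsum : (∑ k : Fin N, (Dmat A B E j.succ k * (Hj k)⁻¹ * (Dmat A B E j.castSucc k)ᵀ))
        = -(Matrix.fromCols (A j) (B j) * (Hj j)⁻¹ * Eᵀ) := by
      rw [Finset.sum_eq_single j]
      · rw [hDeval, hDeval, if_neg (by simp), if_pos (by simp), if_pos (by simp),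
          Matrix.neg_mul, Matrix.neg_mul]
      · intro k _ hk
        have hkN : (k : ℕ) < N := k.isLt
        have hne' : (j : ℕ) ≠ (k : ℕ) := fun h => hk (Fin.ext h.symm)
        rw [hDeval, hDeval]
        by_cases h1 : ((j.succ : Fin (N+1)) : ℕ) = (k : ℕ)
        · have h1' : (j : ℕ) + 1 = (k : ℕ) := by simpa using h1
          rw [if_pos h1, if_neg (by simp only [Fin.coe_castSucc]; omega),
            if_neg (by simp only [Fin.coe_castSucc]; omega)]
          simp
        · have h1' : ¬((j : ℕ) + 1 = (k : ℕ)) := by simpa using h1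
          rw [if_neg h1, if_neg (by simp only [Fin.val_succ]; omega)]
          simp
      · simp
    rw [hsum, hFeval j.castSucc, if_neg (by simp only [Fin.coe_castSucc]; omega)]
    simp
  · -- far off-diagonal blocks vanish
    intro i j hij r c
    rw [master]
    have habs : (i : ℕ) + 2 ≤ (j : ℕ) ∨ (j : ℕ) + 2 ≤ (i : ℕ) := by
      rcases abs_cases ((i : ℤ) - (j : ℤ)) with ⟨h, _⟩ | ⟨h, _⟩ <;> rw [h] at hij <;> omega
    have hsum : (∑ k : Fin N, (Dmat A B E i k * (Hj k)⁻¹ * (Dmat A B E j k)ᵀ)) = 0 := by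
      refine Finset.sum_eq_zero fun k _ => ?_
      rw [hDeval, hDeval]
      split_ifs <;> first | omega | simp
    rw [hsum, hFeval, hFeval]
    split_ifs <;> first | omega | simp
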